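/- Let Φ : ℂⁿ → ℝ be a strictly plurisubharmonic quadratic form. For every s ∈ ℝ, the space H^∞_Φ(ℂⁿ) = ⋂_{r ∈ ℝ} H^r_Φ(ℂⁿ) is dense in H^s_Φ(ℂⁿ) with respect to the norm ‖u‖_s = (∫_{ℂⁿ} |u(z)|² ⟨z⟩^{2s} e^{-2Φ(z)} dL(z))^{1/2}. -/

import Mathlib

open Matrix MeasureTheory ENNReal
set_option maxHeartbeats 1000000

noncomputable section

/-- The squared Euclidean norm `|z|²` on `ℂⁿ`. -/
def eSq {n : ℕ} (z : Fin n → ℂ) : ℝ := ∑ i, Complex.normSq (z i)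

/-- The Japanese bracket `⟨z⟩ = (1 + |z|²)^{1/2}`. -/
def jb {n : ℕ} (z : Fin n → ℂ) : ℝ := Real.sqrt (1 + eSq z)

/-- `Φ : ℂⁿ → ℝ` is a (real) quadratic form of the underlying real coordinates. -/
def IsRQuad {n : ℕ} (Φ : (Fin n → ℂ) → ℝ) : Prop :=
  ∃ B : (Fin n → ℂ) →ₗ[ℝ] (Fin n → ℂ) →ₗ[ℝ] ℝ, ∀ z, Φ z = B z z

/-- `Φ : ℂⁿ → ℝ` is a strictly plurisubharmonic quadratic form.  For a quadratic form `Φ`,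
the Levi form satisfies `(∂²_{z z̄}Φ) w ⋅ w̄ = (Φ(w) + Φ(i w))/2`, so positive definiteness of
the Levi matrix is equivalent to `Φ(w) + Φ(i·w) > 0` for all `w ≠ 0`. -/
def IsSPSH {n : ℕ} (Φ : (Fin n → ℂ) → ℝ) : Prop :=
  IsRQuad Φ ∧ ∀ z : Fin n → ℂ, z ≠ 0 → 0 < Φ z + Φ (Complex.I • z)

/-- The squared weighted norm `‖u‖_s² = ∫ |u(z)|² ⟨z⟩^{2s} e^{-2Φ(z)} L(dz)` (in `ℝ≥0∞`). -/
def hnorm {n : ℕ} (Φ : (Fin n → ℂ) → ℝ) (s : ℝ) (u : (Fin n → ℂ) → ℂ) : ℝ≥0∞ :=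
  ∫⁻ z : Fin n → ℂ, (‖u z‖₊ : ℝ≥0∞) ^ 2 * ENNReal.ofReal (jb z ^ (2 * s) * Real.exp (-2 * Φ z))

/-- A conic subset of `ℂⁿ`. -/
def IsConic {n : ℕ} (V : Set (Fin n → ℂ)) : Prop := ∀ z ∈ V, ∀ t : ℝ, 0 < t → t • z ∈ V

/-- The `1/2`-Gelfand–Shilov wavefront set of `u` relative to `Φ`: the complement in
`ℂⁿ∖{0}` of the points having an open conic neighborhood in `ℂⁿ∖{0}` on which
`|u(z)| ≤ C e^{Φ(z) - c|z|²}`. -/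
def wf {n : ℕ} (Φ : (Fin n → ℂ) → ℝ) (u : (Fin n → ℂ) → ℂ) : Set (Fin n → ℂ) :=
  {z₀ | z₀ ≠ 0 ∧ ¬ ∃ V : Set (Fin n → ℂ), IsOpen V ∧ IsConic V ∧ (0 : Fin n → ℂ) ∉ V ∧ z₀ ∈ V ∧
      ∃ C c : ℝ, 0 < C ∧ 0 < c ∧ ∀ z ∈ V, ‖u z‖ ≤ C * Real.exp (Φ z - c * eSq z)}

/-- A holomorphic quadratic form on `ℂ^{2n} = ℂⁿ_z × ℂⁿ_θ`. -/
def IsCQuad2 {n : ℕ} (Ψ : (Fin n → ℂ) → (Fin n → ℂ) → ℂ) : Prop :=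
  ∃ B : ((Fin n → ℂ) × (Fin n → ℂ)) →ₗ[ℂ] ((Fin n → ℂ) × (Fin n → ℂ)) →ₗ[ℂ] ℂ,
    ∀ z θ, Ψ z θ = B (z, θ) (z, θ)

/-- A real quadratic form on `ℂⁿ × ℂⁿ` viewed as a real vector space. -/
def IsRQuadPair {n : ℕ} (R : (Fin n → ℂ) → (Fin n → ℂ) → ℝ) : Prop :=
  ∃ B : ((Fin n → ℂ) × (Fin n → ℂ)) →ₗ[ℝ] ((Fin n → ℂ) × (Fin n → ℂ)) →ₗ[ℝ] ℝ,
    ∀ z w, R z w = B (z, w) (z, w)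

/-- The Bergman-form integral operator
`G u (z) = a ∫ e^{2Ψ(z, w̄)} u(w) e^{-2Φ(w)} L(dw)`. -/
def berg {n : ℕ} (a : ℂ) (Ψ : (Fin n → ℂ) → (Fin n → ℂ) → ℂ) (Φ : (Fin n → ℂ) → ℝ)
    (u : (Fin n → ℂ) → ℂ) (z : Fin n → ℂ) : ℂ :=
  a * ∫ w : Fin n → ℂ, Complex.exp (2 * Ψ z (star w)) * u w * (Real.exp (-2 * Φ w) : ℂ)

lemma smul_decomp {n : ℕ} (c : ℂ) (w : Fin n → ℂ) :
    c • w = c.re • w + c.im • (Complex.I • w) := by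
  have h1 : c.re • w = (c.re : ℂ) • w := by
    rw [← smul_one_smul ℂ (c.re) w]; norm_num
  have h2 : c.im • (Complex.I • w) = ((c.im : ℂ) * Complex.I) • w := by
    rw [← smul_one_smul ℂ (c.im) (Complex.I • w), smul_smul]; norm_num
  rw [h1, h2, ← add_smul, Complex.re_add_im]

lemma exists_decomp {n : ℕ} (hn : 1 ≤ n) {Φ : (Fin n → ℂ) → ℝ} (hΦ : IsSPSH Φ) :
    ∃ (q : (Fin n → ℂ) → ℂ) (H : (Fin n → ℂ) → ℝ) (c : ℝ),
      Differentiable ℂ q ∧ Continuous H ∧ 0 < c ∧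
      (∀ z, (q z).re = Φ z - H z) ∧
      (∀ (t : ℝ) (z : Fin n → ℂ), H (t • z) = t ^ 2 * H z) ∧
      (∀ z, c * ‖z‖ ^ 2 ≤ H z) := by
  obtain ⟨⟨B, hB⟩, hpos⟩ := hΦ
  set I := Complex.I
  -- the candidate Hermitian part
  set H : (Fin n → ℂ) → ℝ := fun z => (Φ z + Φ (I • z)) / 2 with hH
  -- the "holomorphic part" bilinear form
  set Af : (Fin n → ℂ) → (Fin n → ℂ) → ℂ := fun z w =>
    (((B z w - B (I • z) (I • w)) / 2 : ℝ) : ℂ)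
      - Complex.I * (((B (I • z) w + B z (I • w)) / 2 : ℝ) : ℂ) with hAf
  have hII : ∀ w : Fin n → ℂ, I • (I • w) = -w := by
    intro w; rw [smul_smul, Complex.I_mul_I, neg_one_smul]
  have hre : ∀ z, (Af z z).re = Φ z - H z := by
    intro z
    simp only [hAf, hH, hB]
    simp [Complex.sub_re, Complex.ofReal_re]
    ring
  -- ℝ-linearity in second slot
  have haddr : ∀ z w₁ w₂, Af z (w₁ + w₂) = Af z w₁ + Af z w₂ := by
    intro z w₁ w₂
    simp only [hAf, smul_add, map_add]
    push_cast; ring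
  have hsmulr : ∀ (t : ℝ) z w, Af z (t • w) = (t : ℂ) * Af z w := by
    intro t z w
    have : I • (t • w) = t • (I • w) := smul_comm _ _ _
    simp only [hAf, this, _root_.map_smul, LinearMap.map_smul, smul_eq_mul]
    push_cast; ring
  have hIr : ∀ z w, Af z (I • w) = Complex.I * Af z w := by
    intro z w
    simp only [hAf, hII]
    simp only [map_neg, LinearMap.neg_apply]
    rw [Complex.ext_iff]
    constructor <;>
      simp [Complex.sub_re, Complex.sub_im, Complex.mul_re, Complex.mul_im] <;> ring
  -- ℝ-linearity in first slot
  have haddl : ∀ z₁ z₂ w, Af (z₁ + z₂) w = Af z₁ w + Af z₂ w := by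
    intro z₁ z₂ w
    simp only [hAf, smul_add, map_add, LinearMap.add_apply]
    push_cast; ring
  have hsmull : ∀ (t : ℝ) z w, Af (t • z) w = (t : ℂ) * Af z w := by
    intro t z w
    have : I • (t • z) = t • (I • z) := smul_comm _ _ _
    simp only [hAf, this, _root_.map_smul, LinearMap.map_smul, LinearMap.smul_apply, smul_eq_mul]
    push_cast; ring
  have hIl : ∀ z w, Af (I • z) w = Complex.I * Af z w := by
    intro z w
    simp only [hAf, hII]
    simp only [map_neg, LinearMap.neg_apply]
    rw [Complex.ext_iff]
    constructor <;>
      simp [Complex.sub_re, Complex.sub_im, Complex.mul_re, Complex.mul_im] <;> ring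
  have hsmulc : ∀ (c : ℂ) z w, Af z (c • w) = c * Af z w := by
    intro c z w
    rw [smul_decomp c w, haddr, hsmulr, hsmulr, hIr]
    conv_rhs => rw [← Complex.re_add_im c]
    ring
  have hsmulcl : ∀ (c : ℂ) z w, Af (c • z) w = c * Af z w := by
    intro c z w
    rw [smul_decomp c z, haddl, hsmull, hsmull, hIl]
    conv_rhs => rw [← Complex.re_add_im c]
    ring
  -- package as a ℂ-bilinear map
  set L : (Fin n → ℂ) →ₗ[ℂ] (Fin n → ℂ) →ₗ[ℂ] ℂ :=
    { toFun := fun z =>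
        { toFun := Af z
          map_add' := haddr z
          map_smul' := fun c w => hsmulc c z w }
      map_add' := fun z₁ z₂ => LinearMap.ext fun w => haddl z₁ z₂ w
      map_smul' := fun c z => LinearMap.ext fun w => hsmulcl c z w } with hL
  set L1 : (Fin n → ℂ) →ₗ[ℂ] ((Fin n → ℂ) →L[ℂ] ℂ) :=
    { toFun := fun z => LinearMap.toContinuousLinearMap (L z)
      map_add' := fun z₁ z₂ => by ext w; simp
      map_smul' := fun c z => by ext w; simp } with hL1
  set L2 : (Fin n → ℂ) →L[ℂ] ((Fin n → ℂ) →L[ℂ] ℂ) := LinearMap.toContinuousLinearMap L1 with hL2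
  have hL2app : ∀ z w, L2 z w = Af z w := fun z w => rfl
  have hqdiff : Differentiable ℂ (fun z => Af z z) := by
    have hb : IsBoundedBilinearMap ℂ (fun p : (Fin n → ℂ) × (Fin n → ℂ) => L2 p.1 p.2) :=
      L2.isBoundedBilinearMap
    have := hb.differentiable.comp (differentiable_id.prodMk differentiable_id)
    exact this
  -- continuity of Φ and H
  have hΦcont : Continuous Φ := by
    set M1 : (Fin n → ℂ) →ₗ[ℝ] ((Fin n → ℂ) →L[ℝ] ℝ) :=
      { toFun := fun z => LinearMap.toContinuousLinearMap (B z)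
        map_add' := fun z₁ z₂ => by ext w; simp
        map_smul' := fun c z => by ext w; simp } with hM1
    set M2 : (Fin n → ℂ) →L[ℝ] ((Fin n → ℂ) →L[ℝ] ℝ) := LinearMap.toContinuousLinearMap M1 with hM2
    have hb : IsBoundedBilinearMap ℝ (fun p : (Fin n → ℂ) × (Fin n → ℂ) => M2 p.1 p.2) :=
      M2.isBoundedBilinearMap
    have hc := hb.continuous.comp (continuous_id.prodMk continuous_id)
    have heq : Φ = fun z => M2 z z := by funext z; rw [hB]; rfl
    rw [heq]; exact hc
  have hHcont : Continuous H := by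
    have hI : Continuous fun z : Fin n → ℂ => I • z := continuous_const_smul _
    exact (hΦcont.add (hΦcont.comp hI)).div_const 2
  -- homogeneity
  have hΦhom : ∀ (t : ℝ) (w : Fin n → ℂ), Φ (t • w) = t ^ 2 * Φ w := by
    intro t w
    have h1 : B (t • w) = t • B w := B.map_smul t w
    have h2 : (B w) (t • w) = t • ((B w) w) := (B w).map_smul t w
    rw [hB, hB, h1, LinearMap.smul_apply, h2, smul_eq_mul, smul_eq_mul]; ring
  have hhom : ∀ (t : ℝ) (z : Fin n → ℂ), H (t • z) = t ^ 2 * H z := by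
    intro t z
    have hcomm : I • (t • z) = t • (I • z) := smul_comm _ _ _
    show (Φ (t • z) + Φ (I • (t • z))) / 2 = t ^ 2 * ((Φ z + Φ (I • z)) / 2)
    rw [hcomm, hΦhom, hΦhom]; ring
  have hH0 : H 0 = 0 := by
    have := hhom 0 0
    simpa using this
  have hHpos : ∀ z : Fin n → ℂ, z ≠ 0 → 0 < H z := by
    intro z hz
    have := hpos z hz
    show 0 < (Φ z + Φ (I • z)) / 2
    linarith
  have : Nontrivial (Fin n → ℂ) := by
    have : NeZero n := ⟨by omega⟩
    infer_instance
  obtain ⟨z₀, hz₀mem, hz₀min⟩ := (isCompact_sphere (0 : Fin n → ℂ) 1).exists_isMinOn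
    (NormedSpace.sphere_nonempty.mpr zero_le_one) hHcont.continuousOn
  have hz₀norm : ‖z₀‖ = 1 := mem_sphere_zero_iff_norm.mp hz₀mem
  have hz₀ne : z₀ ≠ 0 := by
    intro h; rw [h] at hz₀norm; simp at hz₀norm
  refine ⟨fun z => Af z z, H, H z₀, hqdiff, hHcont, hHpos z₀ hz₀ne, hre, hhom, ?_⟩
  intro z
  by_cases hz : z = 0
  · subst hz; simp [hH0]
  · have hnz : (0:ℝ) < ‖z‖ := norm_pos_iff.mpr hz
    set w : Fin n → ℂ := ‖z‖⁻¹ • z with hw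
    have hwnorm : ‖w‖ = 1 := by
      rw [hw, norm_smul]
      simp [abs_of_pos (inv_pos.mpr hnz)]
      field_simp
    have hzw : z = ‖z‖ • w := by
      rw [hw, smul_smul]
      rw [mul_inv_cancel₀ (ne_of_gt hnz), one_smul]
    have hmin : H z₀ ≤ H w := isMinOn_iff.mp hz₀min w (mem_sphere_zero_iff_norm.mpr hwnorm)
    have hz2 : H z = ‖z‖ ^ 2 * H w := by
      conv_lhs => rw [hzw]
      rw [hhom]
    nlinarith


lemma eSq_nonneg {n : ℕ} (z : Fin n → ℂ) : 0 ≤ eSq z :=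
  Finset.sum_nonneg fun i _ => Complex.normSq_nonneg _

lemma eSq_smul {n : ℕ} (t : ℝ) (z : Fin n → ℂ) : eSq (t • z) = t ^ 2 * eSq z := by
  unfold eSq
  rw [Finset.mul_sum]
  refine Finset.sum_congr rfl fun i _ => ?_
  rw [Pi.smul_apply, Complex.real_smul, Complex.normSq_mul, Complex.normSq_ofReal]
  ring

lemma eSq_le {n : ℕ} (z : Fin n → ℂ) : eSq z ≤ n * ‖z‖ ^ 2 := by
  have h : ∀ i, Complex.normSq (z i) ≤ ‖z‖ ^ 2 := by
    intro i
    rw [Complex.normSq_eq_norm_sq]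
    have := norm_le_pi_norm z i
    have h0 : (0:ℝ) ≤ ‖z i‖ := norm_nonneg _
    calc ‖z i‖ ^ 2 = ‖z i‖ ^ 2 := rfl
    _ ≤ ‖z‖ ^ 2 := by nlinarith [norm_nonneg z]
  calc eSq z ≤ ∑ _i : Fin n, ‖z‖ ^ 2 := Finset.sum_le_sum fun i _ => h i
  _ = n * ‖z‖ ^ 2 := by simp [mul_comm]

lemma one_le_jb {n : ℕ} (z : Fin n → ℂ) : 1 ≤ jb z := by
  have h1 : (1:ℝ) ≤ 1 + eSq z := by linarith [eSq_nonneg z]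
  calc (1:ℝ) = Real.sqrt 1 := Real.sqrt_one.symm
  _ ≤ Real.sqrt (1 + eSq z) := Real.sqrt_le_sqrt h1

lemma jb_pos {n : ℕ} (z : Fin n → ℂ) : 0 < jb z := lt_of_lt_of_le one_pos (one_le_jb z)

lemma jb_sq {n : ℕ} (z : Fin n → ℂ) : jb z ^ 2 = 1 + eSq z :=
  Real.sq_sqrt (by linarith [eSq_nonneg z])

lemma jb_smul_le {n : ℕ} {t : ℝ} (h0 : 0 ≤ t) (h1 : t ≤ 1) (z : Fin n → ℂ) :
    jb (t • z) ≤ jb z := by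
  apply Real.sqrt_le_sqrt
  rw [eSq_smul]
  have ht2 : t ^ 2 ≤ 1 := by nlinarith
  nlinarith [eSq_nonneg z]

lemma jb_le_two_smul {n : ℕ} {t : ℝ} (h0 : 1/2 ≤ t) (z : Fin n → ℂ) :
    jb z ≤ 2 * jb (t • z) := by
  have h4 : (2:ℝ) = Real.sqrt 4 := by
    rw [show (4:ℝ) = 2^2 by norm_num, Real.sqrt_sq (by norm_num : (0:ℝ) ≤ 2)]
  rw [jb, jb, h4, ← Real.sqrt_mul (by norm_num : (0:ℝ) ≤ 4)]
  apply Real.sqrt_le_sqrt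
  rw [eSq_smul]
  have ht2 : 1/4 ≤ t ^ 2 := by nlinarith
  nlinarith [eSq_nonneg z]

lemma jb_cont {n : ℕ} : Continuous (jb (n := n)) := by
  apply Real.continuous_sqrt.comp
  apply continuous_const.add
  unfold eSq
  exact continuous_finset_sum _ fun i _ => Complex.continuous_normSq.comp (continuous_apply i)

lemma jb_rpow_cont {n : ℕ} (m : ℝ) : Continuous fun z : Fin n → ℂ => jb z ^ m := by
  rw [continuous_iff_continuousAt]
  intro z
  have h1 : ContinuousAt Real.log (jb z) := Real.continuousAt_log (jb_pos z).ne'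
  have h2 : ContinuousAt (fun z : Fin n → ℂ => Real.exp (Real.log (jb z) * m)) z :=
    Real.continuous_exp.continuousAt.comp (((h1.comp jb_cont.continuousAt).mul continuousAt_const))
  have heq : (fun z : Fin n → ℂ => jb z ^ m) =ᶠ[nhds z] fun z => Real.exp (Real.log (jb z) * m) := by
    filter_upwards with w
    rw [Real.rpow_def_of_pos (jb_pos w)]
  exact h2.congr heq.symm

lemma lintegral_comp_smul' {n : ℕ} (f : (Fin n → ℂ) → ℝ≥0∞) (hf : Measurable f) {t : ℝ}
    (ht : t ≠ 0) :
    ∫⁻ z : Fin n → ℂ, f (t • z) =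
      ENNReal.ofReal |(t ^ (Module.finrank ℝ (Fin n → ℂ)))⁻¹| * ∫⁻ z, f z := by
  rw [← lintegral_map hf (measurable_const_smul t), Measure.map_addHaar_smul volume ht,
    lintegral_smul_measure, smul_eq_mul]

lemma tail_small {n : ℕ} (f : (Fin n → ℂ) → ℝ≥0∞) (hf : Measurable f)
    (hfin : ∫⁻ z, f z < ⊤) {δ : ℝ≥0∞} (hδ : 0 < δ) :
    ∃ R : ℝ, 0 < R ∧ ∫⁻ z in {z : Fin n → ℂ | R < ‖z‖}, f z < δ := by
  set ν := (volume : Measure (Fin n → ℂ)).withDensity f with hν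
  have hmeasS : ∀ R : ℝ, MeasurableSet {z : Fin n → ℂ | R < ‖z‖} := fun R =>
    measurableSet_lt measurable_const continuous_norm.measurable
  have hνapp : ∀ R : ℝ, ν {z | R < ‖z‖} = ∫⁻ z in {z : Fin n → ℂ | R < ‖z‖}, f z := fun R =>
    withDensity_apply f (hmeasS R)
  have hνuniv : ν Set.univ ≠ ⊤ := by
    rw [hν, withDensity_apply f MeasurableSet.univ, setLIntegral_univ]
    exact hfin.ne
  have hinter : (⋂ k : ℕ, {z : Fin n → ℂ | (k:ℝ) < ‖z‖}) = ∅ := by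
    ext z
    simp only [Set.mem_iInter, Set.mem_setOf_eq, Set.mem_empty_iff_false, iff_false, not_forall,
      not_lt]
    obtain ⟨k, hk⟩ := exists_nat_gt ‖z‖
    exact ⟨k, hk.le⟩
  have hanti : Antitone fun k : ℕ => {z : Fin n → ℂ | (k:ℝ) < ‖z‖} := by
    intro a b hab z hz
    simp only [Set.mem_setOf_eq] at *
    exact lt_of_le_of_lt (by exact_mod_cast Nat.cast_le.mpr hab) hz
  set sfun : ℕ → Set (Fin n → ℂ) := fun k => {z : Fin n → ℂ | (k:ℝ) < ‖z‖} with hsfun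
  have hkey := tendsto_measure_iInter_atTop (μ := ν) (s := sfun)
    (fun k => (hmeasS k).nullMeasurableSet) hanti
    ⟨0, ne_top_of_le_ne_top hνuniv (measure_mono (Set.subset_univ _))⟩
  rw [hinter] at hkey
  simp only [measure_empty] at hkey
  obtain ⟨k, hk⟩ := (hkey.eventually (eventually_lt_nhds hδ)).exists
  refine ⟨(k:ℝ) + 1, by positivity, ?_⟩
  have hsub : {z : Fin n → ℂ | (k:ℝ) + 1 < ‖z‖} ⊆ sfun k := by
    intro z hz
    simp only [hsfun, Set.mem_setOf_eq] at *
    linarith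
  calc ∫⁻ z in {z : Fin n → ℂ | (k:ℝ)+1 < ‖z‖}, f z
      = ν {z : Fin n → ℂ | (k:ℝ)+1 < ‖z‖} := (hνapp _).symm
  _ ≤ ν (sfun k) := measure_mono hsub
  _ < δ := hk

lemma poly_exp_bound (k : ℕ) {a : ℝ} (ha : 0 < a) :
    ∃ M : ℝ, 0 < M ∧ ∀ x : ℝ, 0 ≤ x → (1 + x) ^ k * Real.exp (-(a * x)) ≤ M := by
  refine ⟨((Nat.factorial k) : ℝ) * (a⁻¹) ^ k * Real.exp a, by positivity, ?_⟩
  intro x hx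
  have h0 : 0 ≤ a * (1 + x) := by positivity
  have hfact : (0:ℝ) < ((Nat.factorial k) : ℝ) := by exact_mod_cast Nat.factorial_pos k
  have h1 : (a * (1 + x)) ^ k / (Nat.factorial k) ≤ Real.exp (a * (1 + x)) := by
    refine le_trans ?_ (Real.sum_le_exp_of_nonneg h0 (k+1))
    exact Finset.single_le_sum (f := fun i => (a * (1+x)) ^ i / (Nat.factorial i : ℝ))
      (fun i _ => by positivity) (Finset.self_mem_range_succ k)
  have h2 : (a * (1 + x)) ^ k ≤ (Nat.factorial k) * Real.exp (a * (1 + x)) := by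
    rw [div_le_iff₀ hfact] at h1; linarith [h1]
  have hexp : Real.exp (a * (1 + x)) = Real.exp a * Real.exp (a * x) := by
    rw [← Real.exp_add]; ring_nf
  have h3 : a ^ k * (1 + x) ^ k ≤ (Nat.factorial k) * (Real.exp a * Real.exp (a * x)) := by
    rw [← mul_pow, ← hexp]; exact h2
  have hainv : a⁻¹ ^ k * a ^ k = 1 := by
    rw [← mul_pow, inv_mul_cancel₀ ha.ne', one_pow]
  have hexppos : (0:ℝ) < Real.exp (a * x) := Real.exp_pos _
  have hnegexp : Real.exp (-(a * x)) = (Real.exp (a * x))⁻¹ := Real.exp_neg _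
  rw [hnegexp]
  calc (1 + x) ^ k * (Real.exp (a * x))⁻¹
      = (a⁻¹ ^ k * (a ^ k * (1 + x) ^ k)) * (Real.exp (a * x))⁻¹ := by
        rw [← mul_assoc, hainv, one_mul]
    _ ≤ (a⁻¹ ^ k * ((Nat.factorial k) * (Real.exp a * Real.exp (a * x)))) * (Real.exp (a * x))⁻¹ := by
        have hia : (0:ℝ) ≤ a⁻¹ ^ k := by positivity
        have := mul_le_mul_of_nonneg_left h3 hia
        exact mul_le_mul_of_nonneg_right this (by positivity)
    _ = (Nat.factorial k) * a⁻¹ ^ k * Real.exp a * (Real.exp (a * x) * (Real.exp (a * x))⁻¹) := by ring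
    _ = (Nat.factorial k) * a⁻¹ ^ k * Real.exp a := by rw [mul_inv_cancel₀ hexppos.ne', mul_one]

lemma weight_bound {n : ℕ} {H : (Fin n → ℂ) → ℝ} {c : ℝ} (hc : 0 < c)
    (hlow : ∀ z : Fin n → ℂ, c * ‖z‖ ^ 2 ≤ H z) (m : ℝ) {b : ℝ} (hb : 0 < b) :
    ∃ M : ℝ, 0 < M ∧ ∀ z : Fin n → ℂ, jb z ^ m * Real.exp (-(b * H z)) ≤ M := by
  set m' := max m 0 with hm'
  set k := Nat.ceil (m' / 2) with hk
  obtain ⟨M₀, hM₀, hM₀le⟩ := poly_exp_bound k (mul_pos hb hc)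
  refine ⟨(1 + n : ℝ) ^ k * M₀, by positivity, ?_⟩
  intro z
  have hbase : (0:ℝ) < 1 + eSq z := by linarith [eSq_nonneg z]
  have h1 : jb z ^ m ≤ jb z ^ m' :=
    Real.rpow_le_rpow_of_exponent_le (one_le_jb z) (le_max_left _ _)
  have h2 : jb z ^ m' = (1 + eSq z) ^ (m' / 2 : ℝ) := by
    rw [jb, Real.sqrt_eq_rpow, ← Real.rpow_mul hbase.le]
    ring_nf
  have h3 : (1 + eSq z) ^ (m'/2 : ℝ) ≤ (1 + eSq z) ^ (k : ℝ) :=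
    Real.rpow_le_rpow_of_exponent_le (by linarith [eSq_nonneg z]) (Nat.le_ceil _)
  have h4 : (1 + eSq z) ^ (k:ℝ) = (1 + eSq z) ^ k := Real.rpow_natCast _ k
  have h5 : (1 + eSq z) ^ k ≤ ((1+(n:ℝ)) * (1 + ‖z‖^2)) ^ k := by
    apply pow_le_pow_left₀ hbase.le
    nlinarith [eSq_le z, sq_nonneg ‖z‖]
  have h6 : ((1+(n:ℝ)) * (1 + ‖z‖^2)) ^ k = (1+(n:ℝ))^k * (1+‖z‖^2)^k := mul_pow _ _ _
  have h7 : Real.exp (-(b * H z)) ≤ Real.exp (-(b * c * ‖z‖^2)) := by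
    apply Real.exp_le_exp.mpr
    have := hlow z
    nlinarith
  have hjb : jb z ^ m ≤ (1+(n:ℝ))^k * (1+‖z‖^2)^k := by
    rw [← h6]
    calc jb z ^ m ≤ jb z ^ m' := h1
    _ = (1 + eSq z) ^ (m'/2 : ℝ) := h2
    _ ≤ (1 + eSq z) ^ (k:ℝ) := h3
    _ = (1 + eSq z) ^ k := h4
    _ ≤ ((1+(n:ℝ)) * (1 + ‖z‖^2)) ^ k := h5
  calc jb z ^ m * Real.exp (-(b*H z))
      ≤ ((1+(n:ℝ))^k * (1+‖z‖^2)^k) * Real.exp (-(b*c*‖z‖^2)) := by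
        apply mul_le_mul hjb h7 (Real.exp_nonneg _) (by positivity)
  _ = (1+(n:ℝ))^k * ((1+‖z‖^2)^k * Real.exp (-(b*c*‖z‖^2))) := by ring
  _ ≤ (1+(n:ℝ))^k * M₀ := by
        apply mul_le_mul_of_nonneg_left _ (by positivity)
        exact hM₀le _ (sq_nonneg _)

lemma nnnorm_sub_sq_le (a b : ℂ) :
    (‖a - b‖₊ : ℝ≥0∞) ^ 2 ≤ 2 * (‖a‖₊ : ℝ≥0∞) ^ 2 + 2 * (‖b‖₊ : ℝ≥0∞) ^ 2 := by
  have hr : ‖a - b‖ ^ 2 ≤ 2 * ‖a‖ ^ 2 + 2 * ‖b‖ ^ 2 := by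
    nlinarith [norm_sub_le a b, norm_nonneg a, norm_nonneg b, norm_nonneg (a-b),
      pow_le_pow_left₀ (norm_nonneg (a-b)) (norm_sub_le a b) 2, sq_nonneg (‖a‖ - ‖b‖)]
  calc (‖a - b‖₊ : ℝ≥0∞) ^ 2 = ENNReal.ofReal (‖a - b‖ ^ 2) := by
        rw [← enorm_eq_nnnorm, ← ofReal_norm, ← ENNReal.ofReal_pow (norm_nonneg _)]
  _ ≤ ENNReal.ofReal (2 * ‖a‖ ^ 2 + 2 * ‖b‖ ^ 2) := ENNReal.ofReal_le_ofReal hr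
  _ = ENNReal.ofReal (2 * ‖a‖ ^ 2) + ENNReal.ofReal (2 * ‖b‖ ^ 2) :=
        ENNReal.ofReal_add (by positivity) (by positivity)
  _ = 2 * (‖a‖₊ : ℝ≥0∞) ^ 2 + 2 * (‖b‖₊ : ℝ≥0∞) ^ 2 := by
        rw [ENNReal.ofReal_mul (by norm_num), ENNReal.ofReal_mul (by norm_num),
          ENNReal.ofReal_pow (norm_nonneg _), ENNReal.ofReal_pow (norm_nonneg _),
          ofReal_norm, ofReal_norm, enorm_eq_nnnorm, enorm_eq_nnnorm]
        norm_num


/-- For a strictly plurisubharmonic quadratic form `Φ` on `ℂⁿ` and every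
`s ∈ ℝ`, the space `H^∞_Φ(ℂⁿ) = ⋂_r H^r_Φ(ℂⁿ)` is dense in `H^s_Φ(ℂⁿ)` for the norm
`‖·‖_s`: for every `u ∈ H^s_Φ` and `ε > 0` there is `v ∈ H^∞_Φ` with `‖u − v‖_s < ε`
(equivalently `‖u − v‖_s² < ε²`). -/
theorem stmt_5 (n : ℕ) (hn : 1 ≤ n) (Φ : (Fin n → ℂ) → ℝ) (hΦ : IsSPSH Φ) (s : ℝ)
    (u : (Fin n → ℂ) → ℂ) (hu : Differentiable ℂ u) (hus : hnorm Φ s u < ⊤)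
    (ε : ℝ) (hε : 0 < ε) :
    ∃ v : (Fin n → ℂ) → ℂ, Differentiable ℂ v ∧ (∀ r : ℝ, hnorm Φ r v < ⊤) ∧
      hnorm Φ s (u - v) < ENNReal.ofReal (ε ^ 2) := by
  obtain ⟨q, H, c, hqdiff, hHcont, hc, hqre, hhom, hlow⟩ := exists_decomp hn hΦ
  have hHnn : ∀ z : Fin n → ℂ, 0 ≤ H z := fun z => le_trans (by positivity) (hlow z)
  set ut : (Fin n → ℂ) → ℂ := fun z => u z * Complex.exp (-q z) with hut
  have hutdiff : Differentiable ℂ ut := hu.mul (hqdiff.neg.cexp)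
  have hutcont : Continuous ut := hutdiff.continuous
  have hueq : ∀ z, u z = Complex.exp (q z) * ut z := by
    intro z
    rw [hut]
    show u z = Complex.exp (q z) * (u z * Complex.exp (-q z))
    rw [mul_comm (Complex.exp (q z)), mul_assoc, ← Complex.exp_add]
    simp
  -- the fundamental pointwise weight identity
  have hweight : ∀ (e : ℝ) (z : Fin n → ℂ) (w : ℂ),
      (‖Complex.exp (q z) * w‖₊ : ℝ≥0∞) ^ 2 * ENNReal.ofReal (jb z ^ e * Real.exp (-2 * Φ z))
        = (‖w‖₊ : ℝ≥0∞) ^ 2 * ENNReal.ofReal (jb z ^ e * Real.exp (-2 * H z)) := by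
    intro e z w
    have h1 : (‖Complex.exp (q z)‖₊ : ℝ≥0∞) = ENNReal.ofReal (Real.exp (Φ z - H z)) := by
      rw [← enorm_eq_nnnorm, ← ofReal_norm, Complex.norm_exp, hqre]
    have hreal : Real.exp (Φ z - H z) ^ 2 * (jb z ^ e * Real.exp (-2 * Φ z))
        = jb z ^ e * Real.exp (-2 * H z) := by
      rw [sq, ← Real.exp_add, mul_left_comm]
      congr 1
      rw [← Real.exp_add]
      congr 1
      ring
    calc (‖Complex.exp (q z) * w‖₊ : ℝ≥0∞) ^ 2 * ENNReal.ofReal (jb z ^ e * Real.exp (-2 * Φ z))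
        = (‖w‖₊ : ℝ≥0∞) ^ 2 *
            ((‖Complex.exp (q z)‖₊ : ℝ≥0∞) ^ 2 * ENNReal.ofReal (jb z ^ e * Real.exp (-2 * Φ z))) := by
          rw [nnnorm_mul, ENNReal.coe_mul, mul_pow]; ring
    _ = (‖w‖₊ : ℝ≥0∞) ^ 2 * ENNReal.ofReal (jb z ^ e * Real.exp (-2 * H z)) := by
          congr 1
          rw [h1, ← ENNReal.ofReal_pow (Real.exp_nonneg _),
            ← ENNReal.ofReal_mul (by positivity), hreal]
  -- the reference integrand
  set F : (Fin n → ℂ) → ℝ≥0∞ :=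
    fun w => (‖ut w‖₊ : ℝ≥0∞) ^ 2 * ENNReal.ofReal (jb w ^ (2*s) * Real.exp (-2 * H w)) with hF
  have hwcont : ∀ e : ℝ, Continuous fun z : Fin n → ℂ => jb z ^ e * Real.exp (-2 * H z) :=
    fun e => (jb_rpow_cont e).mul (Real.continuous_exp.comp (continuous_const.mul hHcont))
  have hFmeas : Measurable F := by
    apply Measurable.mul (f := fun w => (‖ut w‖₊ : ℝ≥0∞) ^ 2)
      (g := fun w => ENNReal.ofReal (jb w ^ (2*s) * Real.exp (-2 * H w)))
    · exact (hutcont.measurable.nnnorm.coe_nnreal_ennreal).pow_const 2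
    · exact ((hwcont (2*s)).measurable).ennreal_ofReal
  have hFeq : hnorm Φ s u = ∫⁻ w, F w := by
    unfold hnorm
    refine lintegral_congr fun z => ?_
    conv_lhs => rw [hueq z]
    exact hweight (2*s) z (ut z)
  have hFfin : ∫⁻ w, F w < ⊤ := by rw [← hFeq]; exact hus
  set d : ℕ := Module.finrank ℝ (Fin n → ℂ) with hd
  -- the "uniform in t ∈ [1/2,1]" comparison of weights
  have hstar : ∀ (t : ℝ), 1/2 ≤ t → t ≤ 1 → ∀ z : Fin n → ℂ,
      jb z ^ (2*s) * Real.exp (-2 * H z) ≤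
        (2:ℝ) ^ |2*s| * (jb (t • z) ^ (2*s) * Real.exp (-2 * H (t • z))) := by
    intro t ht12 ht1 z
    have ht0 : (0:ℝ) ≤ t := by linarith
    have hjb1 : jb (t • z) ≤ jb z := jb_smul_le ht0 ht1 z
    have hjb2 : jb z ≤ 2 * jb (t • z) := jb_le_two_smul ht12 z
    have hjtpos : 0 < jb (t • z) := jb_pos _
    set ρ : ℝ := jb z / jb (t • z) with hρ
    have hρ1 : 1 ≤ ρ := (one_le_div hjtpos).mpr hjb1
    have hρ2 : ρ ≤ 2 := by
      rw [hρ, div_le_iff₀ hjtpos]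
      linarith
    have hρnn : 0 ≤ ρ := by linarith
    have hjbz : jb z = ρ * jb (t • z) := by
      rw [hρ, div_mul_cancel₀ _ hjtpos.ne']
    have hρs : ρ ^ (2*s) ≤ (2:ℝ) ^ |2*s| := by
      rcases le_or_gt 0 (2*s) with hs | hs
      · calc ρ ^ (2*s) ≤ (2:ℝ) ^ (2*s) := Real.rpow_le_rpow hρnn hρ2 hs
        _ ≤ (2:ℝ) ^ |2*s| := Real.rpow_le_rpow_of_exponent_le (by norm_num) (le_abs_self _)
      · calc ρ ^ (2*s) ≤ 1 := Real.rpow_le_one_of_one_le_of_nonpos hρ1 hs.le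
        _ ≤ (2:ℝ) ^ |2*s| := by
            rw [show (1:ℝ) = (2:ℝ) ^ (0:ℝ) by rw [Real.rpow_zero]]
            exact Real.rpow_le_rpow_of_exponent_le (by norm_num) (abs_nonneg _)
    have hjbs : jb z ^ (2*s) ≤ (2:ℝ) ^ |2*s| * jb (t • z) ^ (2*s) := by
      rw [hjbz, Real.mul_rpow hρnn hjtpos.le]
      exact mul_le_mul_of_nonneg_right hρs (Real.rpow_nonneg hjtpos.le _)
    have hexp : Real.exp (-2 * H z) ≤ Real.exp (-2 * H (t • z)) := by
      apply Real.exp_le_exp.mpr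
      rw [hhom]
      have h1 : t ^ 2 ≤ 1 := by nlinarith
      nlinarith [hHnn z]
    calc jb z ^ (2*s) * Real.exp (-2 * H z)
        ≤ ((2:ℝ) ^ |2*s| * jb (t • z) ^ (2*s)) * Real.exp (-2 * H (t • z)) := by
          apply mul_le_mul hjbs hexp (Real.exp_nonneg _)
          positivity
    _ = (2:ℝ) ^ |2*s| * (jb (t • z) ^ (2*s) * Real.exp (-2 * H (t • z))) := by ring
  -- choice of the tail radius
  have hε2 : (0:ℝ) < ε ^ 2 := by positivity
  set δr : ℝ := (ε^2/4) / (2 + 2 * (2:ℝ)^|2*s| * (2:ℝ)^d) with hδr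
  have hδrpos : 0 < δr := by positivity
  obtain ⟨R₀, hR₀, htail⟩ := tail_small F hFmeas hFfin (ENNReal.ofReal_pos.mpr hδrpos)
  set R : ℝ := 2 * R₀ with hR
  have hRpos : 0 < R := by positivity
  -- weight bound and volume of the ball
  obtain ⟨W₀, hW₀⟩ := (isCompact_closedBall (0 : Fin n → ℂ) R).exists_bound_of_continuousOn
    ((hwcont (2*s)).continuousOn)
  have hW₀nn : (0:ℝ) ≤ W₀ := le_trans (norm_nonneg _) (hW₀ 0 (Metric.mem_closedBall_self hRpos.le))
  set V : ℝ≥0∞ := volume (Metric.closedBall (0 : Fin n → ℂ) R) with hV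
  have hVfin : V < ⊤ := measure_closedBall_lt_top
  set Vr : ℝ := V.toReal with hVr
  have hVrnn : 0 ≤ Vr := ENNReal.toReal_nonneg
  -- choice of η
  set η : ℝ := Real.sqrt ((ε^2/2) / (W₀ * Vr + 1)) with hη
  have hηpos : 0 < η := Real.sqrt_pos.mpr (by positivity)
  have hηsq : η^2 * (W₀ * Vr + 1) = ε^2/2 := by
    rw [hη, Real.sq_sqrt (by positivity)]
    field_simp
  -- choice of t via uniform continuity
  have hucont : UniformContinuousOn ut (Metric.closedBall (0 : Fin n → ℂ) R) :=
    (isCompact_closedBall _ _).uniformContinuousOn_of_continuous hutcont.continuousOn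
  obtain ⟨δ', hδ'pos, hδ'⟩ := (Metric.uniformContinuousOn_iff_le).mp hucont η hηpos
  set t : ℝ := max (1/2) (1 - δ'/(R+1)) with htdef
  have ht12 : 1/2 ≤ t := le_max_left _ _
  have ht0 : 0 < t := lt_of_lt_of_le (by norm_num) ht12
  have ht1 : t < 1 := by
    rw [htdef]
    apply max_lt (by norm_num)
    have : 0 < δ'/(R+1) := by positivity
    linarith
  have htle1 : t ≤ 1 := ht1.le
  have htgap : 1 - t ≤ δ'/(R+1) := by
    have : 1 - δ'/(R+1) ≤ t := le_max_right _ _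
    linarith
  -- the approximant
  refine ⟨fun z => Complex.exp (q z) * ut (t • z), ?_, ?_, ?_⟩
  · -- differentiability
    have hsm : ∀ z : Fin n → ℂ, t • z = ((t:ℂ)) • z := fun z => by
      rw [← smul_one_smul ℂ t z]; norm_num
    have h5 : Differentiable ℂ fun z : Fin n → ℂ => ut (t • z) := by
      simp only [hsm]
      exact hutdiff.comp (by fun_prop)
    exact hqdiff.cexp.mul h5
  · -- finiteness of all weighted norms
    intro r
    have heq : hnorm Φ r (fun z => Complex.exp (q z) * ut (t • z))
        = ∫⁻ z, (‖ut (t • z)‖₊ : ℝ≥0∞) ^ 2 *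
            ENNReal.ofReal (jb z ^ (2*r) * Real.exp (-2 * H z)) := by
      unfold hnorm
      exact lintegral_congr fun z => hweight (2*r) z (ut (t • z))
    rw [heq]
    have hb : (0:ℝ) < 2 * (1 - t^2) := by nlinarith
    obtain ⟨M, hM, hMle⟩ := weight_bound hc hlow (2*r + |2*s|) hb
    have hdom : ∀ z : Fin n → ℂ, jb z ^ (2*r) * Real.exp (-2 * H z)
        ≤ M * (jb (t • z) ^ (2*s) * Real.exp (-2 * H (t • z))) := by
      intro z
      have hexp : Real.exp (-2 * H z)
          = Real.exp (-(2 * (1 - t^2) * H z)) * Real.exp (-2 * H (t • z)) := by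
        rw [← Real.exp_add, hhom]
        congr 1
        ring
      have hsplit : jb z ^ (2*r) = jb z ^ (2*r + |2*s|) * jb z ^ (-|2*s|) := by
        rw [← Real.rpow_add (jb_pos z)]
        congr 1
        ring
      have hA : jb z ^ (-|2*s|) ≤ jb (t • z) ^ (-|2*s|) :=
        Real.rpow_le_rpow_of_nonpos (jb_pos _) (jb_smul_le ht0.le htle1 z)
          (neg_nonpos.mpr (abs_nonneg _))
      have hB : jb (t • z) ^ (-|2*s|) ≤ jb (t • z) ^ (2*s) :=
        Real.rpow_le_rpow_of_exponent_le (one_le_jb _) (neg_abs_le _)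
      calc jb z ^ (2*r) * Real.exp (-2 * H z)
          = (jb z ^ (2*r + |2*s|) * Real.exp (-(2 * (1 - t^2) * H z))) *
              (jb z ^ (-|2*s|) * Real.exp (-2 * H (t • z))) := by
            rw [hsplit, hexp]
            ring
      _ ≤ M * (jb (t • z) ^ (2*s) * Real.exp (-2 * H (t • z))) := by
            apply mul_le_mul (hMle z)
              (mul_le_mul_of_nonneg_right (hA.trans hB) (Real.exp_nonneg _))
              (mul_nonneg (Real.rpow_nonneg (jb_pos z).le _) (Real.exp_nonneg _)) hM.le
    calc ∫⁻ z, (‖ut (t • z)‖₊:ℝ≥0∞)^2 * ENNReal.ofReal (jb z ^ (2*r) * Real.exp (-2*H z))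
        ≤ ∫⁻ z, ENNReal.ofReal M * F (t • z) := by
          apply lintegral_mono fun z => ?_
          calc (‖ut (t•z)‖₊:ℝ≥0∞)^2 * ENNReal.ofReal (jb z ^ (2*r) * Real.exp (-2*H z))
              ≤ (‖ut (t•z)‖₊:ℝ≥0∞)^2 *
                  ENNReal.ofReal (M * (jb (t•z) ^ (2*s) * Real.exp (-2*H (t•z)))) :=
                mul_le_mul_right (ENNReal.ofReal_le_ofReal (hdom z)) _
          _ = ENNReal.ofReal M * ((‖ut (t•z)‖₊:ℝ≥0∞)^2 *
                ENNReal.ofReal (jb (t•z) ^ (2*s) * Real.exp (-2*H (t•z)))) := by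
                rw [ENNReal.ofReal_mul hM.le]
                ring
          _ = ENNReal.ofReal M * F (t • z) := rfl
    _ = ENNReal.ofReal M * ∫⁻ z, F (t • z) := lintegral_const_mul' _ _ ENNReal.ofReal_ne_top
    _ < ⊤ := by
          rw [lintegral_comp_smul' F hFmeas ht0.ne']
          exact ENNReal.mul_lt_top ENNReal.ofReal_lt_top
            (ENNReal.mul_lt_top ENNReal.ofReal_lt_top hFfin)
  · -- smallness of the error
    have hGpt : ∀ z, (u - fun z => Complex.exp (q z) * ut (t • z)) z
        = Complex.exp (q z) * (ut z - ut (t • z)) := by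
      intro z
      simp only [Pi.sub_apply]
      rw [hueq z]
      ring
    set G : (Fin n → ℂ) → ℝ≥0∞ := fun z => (‖ut z - ut (t • z)‖₊ : ℝ≥0∞) ^ 2 *
      ENNReal.ofReal (jb z ^ (2*s) * Real.exp (-2 * H z)) with hG
    have hGeq : hnorm Φ s (u - fun z => Complex.exp (q z) * ut (t • z)) = ∫⁻ z, G z := by
      unfold hnorm
      refine lintegral_congr fun z => ?_
      rw [hGpt z]
      exact hweight (2*s) z _
    rw [hGeq]
    have hball : MeasurableSet (Metric.closedBall (0 : Fin n → ℂ) R) := measurableSet_closedBall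
    rw [← lintegral_add_compl G hball]
    have hVconv : V = ENNReal.ofReal Vr := (ENNReal.ofReal_toReal hVfin.ne).symm
    -- inner estimate
    have hinner : ∫⁻ z in Metric.closedBall (0 : Fin n → ℂ) R, G z ≤ ENNReal.ofReal (ε^2/2) := by
      have hptwise : ∀ z ∈ Metric.closedBall (0 : Fin n → ℂ) R,
          G z ≤ ENNReal.ofReal (η^2 * W₀) := by
        intro z hz
        have hzR : ‖z‖ ≤ R := by rwa [Metric.mem_closedBall, dist_zero_right] at hz
        have htz : t • z ∈ Metric.closedBall (0 : Fin n → ℂ) R := by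
          rw [Metric.mem_closedBall, dist_zero_right, norm_smul]
          calc ‖(t:ℝ)‖ * ‖z‖ ≤ 1 * R := by
                apply mul_le_mul _ hzR (norm_nonneg z) zero_le_one
                rw [Real.norm_eq_abs, abs_of_pos ht0]
                exact htle1
          _ = R := one_mul R
        have hdist : dist z (t • z) ≤ δ' := by
          rw [dist_eq_norm]
          have hzz : z - t • z = (1 - t) • z := by rw [sub_smul, one_smul]
          rw [hzz, norm_smul, Real.norm_eq_abs, abs_of_nonneg (by linarith : (0:ℝ) ≤ 1 - t)]
          calc (1-t) * ‖z‖ ≤ (δ'/(R+1)) * R := by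
                apply mul_le_mul htgap hzR (norm_nonneg z) (by positivity)
          _ ≤ δ' := by
                rw [div_mul_eq_mul_div, div_le_iff₀ (by linarith : (0:ℝ) < R + 1)]
                nlinarith
        have hη' : ‖ut z - ut (t • z)‖ ≤ η := by
          have := hδ' z hz (t • z) htz hdist
          rwa [dist_eq_norm] at this
        calc G z ≤ ENNReal.ofReal (η^2) * ENNReal.ofReal W₀ := by
              rw [hG]
              apply mul_le_mul'
              · rw [← enorm_eq_nnnorm, ← ofReal_norm, ← ENNReal.ofReal_pow (norm_nonneg _)]
                exact ENNReal.ofReal_le_ofReal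
                  (by nlinarith [norm_nonneg (ut z - ut (t • z))])
              · exact ENNReal.ofReal_le_ofReal (le_trans (Real.le_norm_self _) (hW₀ z hz))
        _ = ENNReal.ofReal (η^2 * W₀) := (ENNReal.ofReal_mul (by positivity)).symm
      calc ∫⁻ z in Metric.closedBall (0 : Fin n → ℂ) R, G z
          ≤ ∫⁻ _z in Metric.closedBall (0 : Fin n → ℂ) R, ENNReal.ofReal (η^2 * W₀) :=
            setLIntegral_mono measurable_const hptwise
      _ = ENNReal.ofReal (η^2 * W₀) * V := by rw [setLIntegral_const]
      _ ≤ ENNReal.ofReal (ε^2/2) := by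
            rw [hVconv, ← ENNReal.ofReal_mul (by positivity)]
            apply ENNReal.ofReal_le_ofReal
            nlinarith [sq_nonneg η]
    -- outer estimate
    have hCs : (0:ℝ) ≤ (2:ℝ)^|2*s| := by positivity
    have houter : ∫⁻ z in (Metric.closedBall (0 : Fin n → ℂ) R)ᶜ, G z
        ≤ ENNReal.ofReal (ε^2/4) := by
      have hFtmeas : Measurable fun z : Fin n → ℂ => F (t • z) :=
        hFmeas.comp (measurable_const_smul t)
      have hpt : ∀ z, G z ≤ 2 * F z +
          (2 * ENNReal.ofReal ((2:ℝ)^|2*s|)) * F (t • z) := by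
        intro z
        have hstep : (‖ut (t•z)‖₊:ℝ≥0∞)^2 * ENNReal.ofReal (jb z^(2*s) * Real.exp (-2*H z))
            ≤ ENNReal.ofReal ((2:ℝ)^|2*s|) * F (t•z) := by
          calc (‖ut (t•z)‖₊:ℝ≥0∞)^2 * ENNReal.ofReal (jb z^(2*s) * Real.exp (-2*H z))
              ≤ (‖ut (t•z)‖₊:ℝ≥0∞)^2 * ENNReal.ofReal ((2:ℝ)^|2*s| *
                  (jb (t•z)^(2*s) * Real.exp (-2*H (t•z)))) :=
                mul_le_mul_right (ENNReal.ofReal_le_ofReal (hstar t ht12 htle1 z)) _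
          _ = ENNReal.ofReal ((2:ℝ)^|2*s|) * ((‖ut (t•z)‖₊:ℝ≥0∞)^2 *
                ENNReal.ofReal (jb (t•z)^(2*s) * Real.exp (-2*H (t•z)))) := by
                rw [ENNReal.ofReal_mul hCs]
                ring
          _ = ENNReal.ofReal ((2:ℝ)^|2*s|) * F (t•z) := rfl
        calc G z ≤ (2 * (‖ut z‖₊:ℝ≥0∞)^2 + 2 * (‖ut (t•z)‖₊:ℝ≥0∞)^2) *
              ENNReal.ofReal (jb z^(2*s) * Real.exp (-2*H z)) :=
            mul_le_mul_left (nnnorm_sub_sq_le _ _) _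
        _ = 2 * F z + 2 * ((‖ut (t•z)‖₊:ℝ≥0∞)^2 *
              ENNReal.ofReal (jb z^(2*s) * Real.exp (-2*H z))) := by
            rw [hF]
            ring
        _ ≤ 2 * F z + (2 * ENNReal.ofReal ((2:ℝ)^|2*s|)) * F (t • z) := by
            apply add_le_add_right
            rw [mul_assoc]
            exact mul_le_mul_right hstep 2
      have hsub1 : (Metric.closedBall (0 : Fin n → ℂ) R)ᶜ ⊆ {z : Fin n → ℂ | R₀ < ‖z‖} := by
        intro z hz
        simp only [Set.mem_compl_iff, Metric.mem_closedBall, dist_zero_right, not_le] at hz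
        simp only [Set.mem_setOf_eq]
        rw [hR] at hz
        linarith
      have hT1 : ∫⁻ z in (Metric.closedBall (0 : Fin n → ℂ) R)ᶜ, F z ≤ ENNReal.ofReal δr :=
        le_trans (lintegral_mono_set hsub1) htail.le
      have hT2 : ∫⁻ z in (Metric.closedBall (0 : Fin n → ℂ) R)ᶜ, F (t • z)
          ≤ ENNReal.ofReal ((2:ℝ)^d) * ENNReal.ofReal δr := by
        set S : Set (Fin n → ℂ) := {w : Fin n → ℂ | t * R < ‖w‖} with hS
        have hSmeas : MeasurableSet S := measurableSet_lt measurable_const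
          continuous_norm.measurable
        have hind : ∀ z : Fin n → ℂ,
            ((Metric.closedBall (0:Fin n → ℂ) R)ᶜ).indicator (fun z => F (t • z)) z
              = S.indicator F (t • z) := by
          intro z
          by_cases hz : z ∈ (Metric.closedBall (0:Fin n → ℂ) R)ᶜ
          · have h1 : t • z ∈ S := by
              simp only [Set.mem_compl_iff, Metric.mem_closedBall, dist_zero_right,
                not_le] at hz
              simp only [hS, Set.mem_setOf_eq, norm_smul, Real.norm_eq_abs, abs_of_pos ht0]
              exact mul_lt_mul_of_pos_left hz ht0
            rw [Set.indicator_of_mem hz, Set.indicator_of_mem h1]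
          · have h1 : t • z ∉ S := by
              simp only [Set.mem_compl_iff, Metric.mem_closedBall, dist_zero_right,
                not_lt, not_le] at hz
              simp only [hS, Set.mem_setOf_eq, norm_smul, Real.norm_eq_abs,
                abs_of_pos ht0, not_lt]
              exact mul_le_mul_of_nonneg_left hz ht0.le
            rw [Set.indicator_of_notMem hz, Set.indicator_of_notMem h1]
        calc ∫⁻ z in (Metric.closedBall (0:Fin n → ℂ) R)ᶜ, F (t • z)
            = ∫⁻ z, S.indicator F (t • z) := by
              rw [← lintegral_indicator hball.compl]
              exact lintegral_congr hind
        _ = ENNReal.ofReal |((t:ℝ) ^ d)⁻¹| * ∫⁻ w, S.indicator F w :=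
              lintegral_comp_smul' (S.indicator F) (hFmeas.indicator hSmeas) ht0.ne'
        _ = ENNReal.ofReal |((t:ℝ) ^ d)⁻¹| * ∫⁻ w in S, F w := by
              rw [lintegral_indicator hSmeas]
        _ ≤ ENNReal.ofReal ((2:ℝ)^d) * ENNReal.ofReal δr := by
              apply mul_le_mul'
              · apply ENNReal.ofReal_le_ofReal
                rw [abs_of_nonneg (by positivity)]
                have hp1 : ((1:ℝ)/2)^d ≤ t^d := pow_le_pow_left₀ (by norm_num) ht12 d
                have hp2 : (0:ℝ) < ((1:ℝ)/2)^d := by positivity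
                calc ((t:ℝ)^d)⁻¹ ≤ (((1:ℝ)/2)^d)⁻¹ := by
                      apply inv_anti₀ hp2 hp1
                _ = (2:ℝ)^d := by
                      rw [one_div, inv_pow, inv_inv]
              · refine le_trans (lintegral_mono_set ?_) htail.le
                intro w hw
                simp only [hS, Set.mem_setOf_eq] at hw ⊢
                have : R₀ ≤ t * R := by
                  rw [hR]
                  nlinarith
                linarith
      calc ∫⁻ z in (Metric.closedBall (0 : Fin n → ℂ) R)ᶜ, G z
          ≤ ∫⁻ z in (Metric.closedBall (0 : Fin n → ℂ) R)ᶜ,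
              (2 * F z + (2 * ENNReal.ofReal ((2:ℝ)^|2*s|)) * F (t • z)) :=
            setLIntegral_mono ((hFmeas.const_mul 2).add (hFtmeas.const_mul _))
              (fun z _ => hpt z)
      _ = 2 * (∫⁻ z in (Metric.closedBall (0 : Fin n → ℂ) R)ᶜ, F z) +
            (2 * ENNReal.ofReal ((2:ℝ)^|2*s|)) *
              (∫⁻ z in (Metric.closedBall (0 : Fin n → ℂ) R)ᶜ, F (t • z)) := by
            rw [lintegral_add_left (hFmeas.const_mul 2),
              lintegral_const_mul' _ _ (by norm_num : (2:ℝ≥0∞) ≠ ⊤),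
              lintegral_const_mul' _ _ ?_]
            exact ENNReal.mul_ne_top (by norm_num) ENNReal.ofReal_ne_top
      _ ≤ 2 * ENNReal.ofReal δr + (2 * ENNReal.ofReal ((2:ℝ)^|2*s|)) *
            (ENNReal.ofReal ((2:ℝ)^d) * ENNReal.ofReal δr) := by
            apply add_le_add
            · exact mul_le_mul_right hT1 2
            · exact mul_le_mul_right hT2 _
      _ = ENNReal.ofReal ((2 + 2 * (2:ℝ)^|2*s| * (2:ℝ)^d) * δr) := by
            rw [show (2:ℝ≥0∞) = ENNReal.ofReal 2 by norm_num]
            rw [← ENNReal.ofReal_mul (by norm_num), ← ENNReal.ofReal_mul (by norm_num),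
              ← ENNReal.ofReal_mul (by positivity), ← ENNReal.ofReal_mul (by positivity),
              ← ENNReal.ofReal_add (by positivity) (by positivity)]
            congr 1
            ring
      _ = ENNReal.ofReal (ε^2/4) := by
            congr 1
            rw [hδr]
            field_simp
    calc (∫⁻ z in Metric.closedBall (0 : Fin n → ℂ) R, G z) +
          (∫⁻ z in (Metric.closedBall (0 : Fin n → ℂ) R)ᶜ, G z)
        ≤ ENNReal.ofReal (ε^2/2) + ENNReal.ofReal (ε^2/4) := add_le_add hinner houter
    _ = ENNReal.ofReal (ε^2/2 + ε^2/4) :=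
        (ENNReal.ofReal_add (by positivity) (by positivity)).symm
    _ < ENNReal.ofReal (ε^2) := by
        rw [ENNReal.ofReal_lt_ofReal_iff hε2]
        nlinarith
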